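/- Suppose there exists a d×d complex matrix X with [X, M^s] = F^s for every s ∈ S, and let v, w ∈ ℂ^d satisfy vᵀ X = λ_v vᵀ and X w = λ_w w for scalars λ_v, λ_w. Then for every n ≥ 1 and every word (s_1, …, s_n) ∈ S^n, Σ_{k=1}^{n} vᵀ M^{s_1} ⋯ M^{s_{k−1}} F^{s_k} M^{s_{k+1}} ⋯ M^{s_n} w = (λ_v − λ_w) · vᵀ M^{s_1} ⋯ M^{s_n} w. (This is the open-boundary part of Theorem 1: the MPS with these boundary terminations is an eigenstate of the on-site Hamiltonian with eigenvalue λ_v − λ_w.) -/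

import Mathlib

open Matrix

lemma telescope_comm {R : Type*} [Ring R] (X : R) :
    ∀ (n : ℕ) (A : Fin n → R),
      ∑ k : Fin n, (List.ofFn fun j : Fin n =>
        if j = k then X * A j - A j * X else A j).prod
      = X * (List.ofFn A).prod - (List.ofFn A).prod * X := by
  intro n
  induction n with
  | zero => simp
  | succ m ih =>
    intro A
    rw [Fin.sum_univ_succ]
    have h0 : (List.ofFn fun j : Fin (m+1) =>
        if j = 0 then X * A j - A j * X else A j).prod
        = (X * A 0 - A 0 * X) * (List.ofFn fun i : Fin m => A i.succ).prod := by
      rw [List.ofFn_succ, List.prod_cons]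
      simp [Fin.succ_ne_zero]
    have h1 : ∀ k : Fin m, (List.ofFn fun j : Fin (m+1) =>
        if j = k.succ then X * A j - A j * X else A j).prod
        = A 0 * (List.ofFn fun i : Fin m =>
            if i = k then X * A i.succ - A i.succ * X else A i.succ).prod := by
      intro k
      rw [List.ofFn_succ, List.prod_cons]
      simp [Ne.symm (Fin.succ_ne_zero k), Fin.succ_inj]
    simp only [h0, h1]
    rw [← Finset.mul_sum, ih (fun i => A i.succ), List.ofFn_succ (f := A), List.prod_cons]
    noncomm_ring

lemma dot_sum_mulVec {d : ℕ} {ι : Type*} (t : Finset ι)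
    (A : ι → Matrix (Fin d) (Fin d) ℂ) (v w : Fin d → ℂ) :
    v ⬝ᵥ Matrix.mulVec (∑ k ∈ t, A k) w = ∑ k ∈ t, v ⬝ᵥ Matrix.mulVec (A k) w := by
  classical
  induction t using Finset.induction with
  | empty => simp
  | insert _ _ h ih =>
    rw [Finset.sum_insert h, Finset.sum_insert h, Matrix.add_mulVec, dotProduct_add, ih]

/-- OBC part of Theorem 1: if `[X, M^s] = F^s` for all letters `s`
and the boundary vectors `v, w` are left/right eigenvectors of `X` with
eigenvalues `λ_v, λ_w`, then for every word the sum of boundary insertion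
amplitudes equals `(λ_v − λ_w)` times the plain amplitude. -/
theorem boundary_insertion_sum_eq_eigenvalue_mul
    (d : ℕ) (hd : 1 ≤ d) (S : Type) [Fintype S]
    (M F : S → Matrix (Fin d) (Fin d) ℂ)
    (X : Matrix (Fin d) (Fin d) ℂ)
    (hX : ∀ s : S, X * M s - M s * X = F s)
    (v w : Fin d → ℂ) (lv lw : ℂ)
    (hv : Matrix.vecMul v X = lv • v)
    (hw : Matrix.mulVec X w = lw • w)
    (n : ℕ) (hn : 1 ≤ n) (s : Fin n → S) :
    ∑ k : Fin n,
      v ⬝ᵥ Matrix.mulVec ((List.ofFn fun j : Fin n =>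
        if j = k then F (s j) else M (s j)).prod) w
    = (lv - lw) * (v ⬝ᵥ Matrix.mulVec ((List.ofFn fun j : Fin n => M (s j)).prod) w) := by
  simp only [← hX]
  set P := (List.ofFn fun j : Fin n => M (s j)).prod with hP
  have key : ∑ k : Fin n,
      v ⬝ᵥ Matrix.mulVec ((List.ofFn fun j : Fin n =>
        if j = k then X * M (s j) - M (s j) * X else M (s j)).prod) w
      = v ⬝ᵥ Matrix.mulVec (X * P - P * X) w := by
    rw [← telescope_comm X n (fun j => M (s j)), dot_sum_mulVec]
  have h2 : v ⬝ᵥ Matrix.mulVec (X * P) w = lv * (v ⬝ᵥ Matrix.mulVec P w) := by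
    rw [Matrix.dotProduct_mulVec, ← Matrix.vecMul_vecMul, hv, Matrix.smul_vecMul,
      smul_dotProduct, ← Matrix.dotProduct_mulVec]
    simp
  have h3 : v ⬝ᵥ Matrix.mulVec (P * X) w = lw * (v ⬝ᵥ Matrix.mulVec P w) := by
    rw [← Matrix.mulVec_mulVec, hw, Matrix.mulVec_smul, dotProduct_smul]
    simp
  rw [key, Matrix.sub_mulVec, dotProduct_sub, h2, h3]
  ring
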